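/- Let T be a tournament on 10 vertices partitioned into A and B with |A| = |B| = 5 and the out-degrees of A summing to 11, and let e be the unique edge from A to B. Then any directed cycle of T that contains vertices of both A and B must contain the edge e; consequently, two vertex-disjoint directed cycles cannot both contain vertices of both A and B. -/

import Mathlib

open Finset

/-- A tournament on `Fin n`: irreflexive, and between any two distinct
vertices exactly one directed edge. -/
def IsTournament {n : ℕ} (T : Fin n → Fin n → Bool) : Prop :=
  (∀ v, T v v = false) ∧ ∀ u v : Fin n, u ≠ v → (T u v = !T v u)

/-- The score (out-degree) of a vertex in a tournament. -/
def score {n : ℕ} (T : Fin n → Fin n → Bool) (v : Fin n) : ℕ :=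
  (Finset.univ.filter (fun w => T v w = true)).card

/-- A consistently oriented (directed) cycle, given by an injective cyclic
sequence of vertices each beating the next. -/
def IsDirCycle {n m : ℕ} (T : Fin n → Fin n → Bool) (c : Fin (m + 1) → Fin n) : Prop :=
  Function.Injective c ∧ ∀ i, T (c i) (c (i + 1)) = true

/-- If exactly one edge `ab` of a 10-vertex tournament is oriented from the
5-set `A` (whose scores sum to 11) to the complement, then every directed
cycle meeting both `A` and its complement contains the edge `ab`; consequently
two vertex-disjoint directed cycles cannot both meet both sides. -/
theorem crossing_cycles_use_unique_edge {T : Fin 10 → Fin 10 → Bool}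
    (hT : IsTournament T) (A : Finset (Fin 10)) (hA : A.card = 5)
    (hsum : ∑ v ∈ A, score T v = 11)
    (a b : Fin 10) (haA : a ∈ A) (hbA : b ∉ A) (hab : T a b = true)
    (huniq : ∀ x ∈ A, ∀ y ∉ A, T x y = true → x = a ∧ y = b) :
    (∀ (m : ℕ) (c : Fin (m + 1) → Fin 10), IsDirCycle T c →
      (∃ i, c i ∈ A) → (∃ j, c j ∉ A) → ∃ i, c i = a ∧ c (i + 1) = b) ∧
    (∀ (m₁ m₂ : ℕ) (c₁ : Fin (m₁ + 1) → Fin 10) (c₂ : Fin (m₂ + 1) → Fin 10),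
      IsDirCycle T c₁ → IsDirCycle T c₂ → (∀ i j, c₁ i ≠ c₂ j) →
      ¬ (((∃ i, c₁ i ∈ A) ∧ (∃ j, c₁ j ∉ A)) ∧
         ((∃ i, c₂ i ∈ A) ∧ (∃ j, c₂ j ∉ A)))) := by
  have main : ∀ (m : ℕ) (c : Fin (m + 1) → Fin 10), IsDirCycle T c →
      (∃ i, c i ∈ A) → (∃ j, c j ∉ A) → ∃ i, c i = a ∧ c (i + 1) = b := by
    intro m c hc ⟨i₀, hi₀⟩ ⟨j₀, hj₀⟩
    by_contra hcon
    push_neg at hcon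
    -- then every step stays in A
    have step : ∀ i, c i ∈ A → c (i + 1) ∈ A := by
      intro i hi
      by_contra hni
      obtain ⟨h1, h2⟩ := huniq _ hi _ hni (hc.2 i)
      exact (hcon i h1) h2
    open Fin.NatCast Fin.CommRing in
    have all : ∀ k : ℕ, c (i₀ + (k : Fin (m + 1))) ∈ A := by
      intro k
      induction k with
      | zero => simpa using hi₀
      | succ n ih =>
        have : ((n + 1 : ℕ) : Fin (m + 1)) = (n : Fin (m + 1)) + 1 := by push_cast; ring
        rw [this, ← add_assoc]
        exact step _ ih
    have := all (j₀ - i₀).val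
    rw [Fin.cast_val_eq_self, add_sub_cancel] at this
    exact hj₀ this
  refine ⟨main, ?_⟩
  intro m₁ m₂ c₁ c₂ h1 h2 hdisj ⟨⟨ha1, hb1⟩, ⟨ha2, hb2⟩⟩
  obtain ⟨i, hi, -⟩ := main m₁ c₁ h1 ha1 hb1
  obtain ⟨j, hj, -⟩ := main m₂ c₂ h2 ha2 hb2
  exact hdisj i j (hi.trans hj.symm)
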